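/- The minimum uplink energy function e_UL is jointly convex: the function (t,s) ↦ e_UL(t,s) is convex on the convex set {(t,s) ∈ ℝ² : t > 0, s ≥ 0}. -/

import Mathlib

open Matrix
open scoped ComplexOrder

/-- Minimum uplink energy: infimum of `k₁ t + k₂ t · Re(Tr Q)` over positive semidefinite
transmit covariance matrices `Q` sustaining `s` bits in time `t` over channel `H` with
bandwidth `W`. -/
noncomputable def eUL {nF nMT : ℕ} (H : Matrix (Fin nF) (Fin nMT) ℂ)
    (W k1 k2 : ℝ) (t s : ℝ) : ℝ :=
  sInf { e : ℝ | ∃ Q : Matrix (Fin nMT) (Fin nMT) ℂ, Q.PosSemidef ∧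
    s ≤ W * t * Real.logb 2 (((1 : Matrix (Fin nF) (Fin nF) ℂ) + H * Q * Hᴴ).det.re) ∧
    e = k1 * t + k2 * t * (Matrix.trace Q).re }

section EULAux

variable {n : ℕ}

open scoped MatrixOrder


lemma aux_smul_psd {Q : Matrix (Fin n) (Fin n) ℂ} (hQ : Q.PosSemidef)
    {r : ℝ} (hr : 0 ≤ r) : ((r : ℂ) • Q).PosSemidef := by
  refine Matrix.PosSemidef.of_dotProduct_mulVec_nonneg ?_ ?_
  · show ((r:ℂ) • Q)ᴴ = _
    rw [conjTranspose_smul, hQ.1]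
    simp
  · intro x
    rw [smul_mulVec, dotProduct_smul, smul_eq_mul]
    exact mul_nonneg (Complex.zero_le_real.mpr hr) (hQ.dotProduct_mulVec_nonneg x)

lemma aux_trace_re_nonneg {Q : Matrix (Fin n) (Fin n) ℂ} (hQ : Q.PosSemidef) :
    0 ≤ Q.trace.re := by
  rw [Matrix.trace, Complex.re_sum]
  refine Finset.sum_nonneg fun i _ => ?_
  have h := hQ.dotProduct_mulVec_nonneg (Pi.single i 1)
  rw [Complex.nonneg_iff] at h
  have : star (Pi.single i 1) ⬝ᵥ Q *ᵥ Pi.single i 1 = Q i i := by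
    simp [dotProduct, mulVec, Pi.single_apply, Finset.sum_ite_eq, Finset.mul_sum]
  rw [this] at h
  exact h.1

lemma aux_det_smul_one_add_smul {M : Matrix (Fin n) (Fin n) ℂ} (hM : M.IsHermitian)
    (a b : ℝ) :
    ((a : ℂ) • 1 + (b : ℂ) • M).det
      = ((∏ i, (a + b * hM.eigenvalues i) : ℝ) : ℂ) := by
  set U : Matrix (Fin n) (Fin n) ℂ := (hM.eigenvectorUnitary : Matrix (Fin n) (Fin n) ℂ) with hUdef
  have hU : U * star U = 1 := Matrix.mem_unitaryGroup_iff.mp hM.eigenvectorUnitary.2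
  have hU' : star U * U = 1 := Matrix.mem_unitaryGroup_iff'.mp hM.eigenvectorUnitary.2
  have hdiag : diagonal (fun i => (a : ℂ) + (b : ℂ) * hM.eigenvalues i)
      = (a : ℂ) • (1 : Matrix (Fin n) (Fin n) ℂ)
        + (b : ℂ) • diagonal (RCLike.ofReal ∘ hM.eigenvalues) := by
    rw [← Matrix.diagonal_one, ← Matrix.diagonal_smul, ← Matrix.diagonal_smul,
      ← Matrix.diagonal_add]
    ext i j
    by_cases h : i = j <;>
      simp [h, Matrix.diagonal_apply, Matrix.one_apply, mul_comm]
  have key : (a : ℂ) • 1 + (b : ℂ) • M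
      = U * diagonal (fun i => (a : ℂ) + (b : ℂ) * hM.eigenvalues i) * star U := by
    rw [hdiag, Matrix.mul_add, Matrix.add_mul]
    congr 1
    · rw [Matrix.mul_smul, Matrix.smul_mul, Matrix.mul_one, hU]
    · rw [Matrix.mul_smul, Matrix.smul_mul]
      congr 1
      rw [hUdef]
      exact hM.spectral_theorem
  rw [key, Matrix.det_mul_comm, ← Matrix.mul_assoc, hU', Matrix.one_mul, Matrix.det_diagonal,
    Complex.ofReal_prod]
  norm_cast

lemma aux_posdef_det_eq {P : Matrix (Fin n) (Fin n) ℂ} (hP : P.PosDef) :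
    P.det = (P.det.re : ℂ) ∧ 0 < P.det.re := by
  have h := hP.det_pos
  rw [Complex.lt_def] at h
  refine ⟨Complex.ext rfl ?_, h.1⟩
  · simpa using h.2.symm

lemma aux_logdet_concave {A B : Matrix (Fin n) (Fin n) ℂ} (hA : A.PosDef) (hB : B.PosDef)
    {α β : ℝ} (hα : 0 ≤ α) (hβ : 0 ≤ β) (hαβ : α + β = 1) :
    α * Real.log A.det.re + β * Real.log B.det.re
      ≤ Real.log (((α : ℂ) • A + (β : ℂ) • B).det.re) := by
  classical
  have hAs := hA.posSemidef
  set S := CFC.sqrt A with hSdef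
  have hS2 : S * S = A := CFC.sqrt_mul_sqrt_self A hAs.nonneg
  have hSherm : S.IsHermitian := (CFC.sqrt_nonneg A).posSemidef.1
  have hAdet : (0 : ℂ) < A.det := hA.det_pos
  have hSunit : IsUnit S.det := by
    have hdd : S.det * S.det = A.det := by rw [← Matrix.det_mul, hS2]
    have : S.det ≠ 0 := by
      intro h
      rw [h, mul_zero] at hdd
      exact (ne_of_gt hAdet) hdd.symm
    exact this.isUnit
  have hSinvH : (S⁻¹).IsHermitian := hSherm.inv
  set C := S⁻¹ * B * S⁻¹ with hCdef
  have hC : C.PosDef := by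
    have h0 : ((S⁻¹)ᴴ * B * S⁻¹).PosDef := by
      refine Matrix.PosDef.of_dotProduct_mulVec_pos ?_ ?_
      · exact isHermitian_conjTranspose_mul_mul _ hB.1
      · intro x hx
        have hxS : S⁻¹ *ᵥ x ≠ 0 := by
          intro h
          apply hx
          have h2 : S *ᵥ (S⁻¹ *ᵥ x) = S *ᵥ 0 := by rw [h]
          rwa [Matrix.mulVec_mulVec, Matrix.mul_nonsing_inv _ hSunit, Matrix.one_mulVec,
            Matrix.mulVec_zero] at h2
        simpa only [star_mulVec, Matrix.dotProduct_mulVec, Matrix.vecMul_vecMul]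
          using hB.dotProduct_mulVec_pos hxS
    rwa [hSinvH] at h0
  have hSCS : S * C * S = B := by
    have h1 : S * S⁻¹ = 1 := Matrix.mul_nonsing_inv S hSunit
    have h2 : S⁻¹ * S = 1 := Matrix.nonsing_inv_mul S hSunit
    calc S * (S⁻¹ * B * S⁻¹) * S = S * S⁻¹ * B * (S⁻¹ * S) := by
          simp only [Matrix.mul_assoc]
      _ = B := by rw [h1, h2, Matrix.one_mul, Matrix.mul_one]
  have hmix : (α : ℂ) • A + (β : ℂ) • B = S * ((α : ℂ) • 1 + (β : ℂ) • C) * S := by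
    rw [Matrix.mul_add, Matrix.add_mul]
    congr 1
    · rw [Matrix.mul_smul, Matrix.smul_mul, Matrix.mul_one, hS2]
    · rw [Matrix.mul_smul, Matrix.smul_mul, hSCS]
  have hdet2 : ∀ X : Matrix (Fin n) (Fin n) ℂ, (S * X * S).det = A.det * X.det := by
    intro X
    rw [Matrix.det_mul, Matrix.det_mul, ← hS2, Matrix.det_mul]
    ring
  have hdetmix : ((α : ℂ) • A + (β : ℂ) • B).det
      = A.det * ((α : ℂ) • 1 + (β : ℂ) • C).det := by rw [hmix, hdet2]
  have hdetB : B.det = A.det * C.det := by rw [← hSCS, hdet2]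
  have hlam : ∀ i, 0 < hC.1.eigenvalues i := hC.eigenvalues_pos
  have hdetC : C.det = ((∏ i, hC.1.eigenvalues i : ℝ) : ℂ) := by
    rw [hC.1.det_eq_prod_eigenvalues]
    norm_cast
  have hdmixC : ((α : ℂ) • 1 + (β : ℂ) • C).det
      = ((∏ i, (α + β * hC.1.eigenvalues i) : ℝ) : ℂ) :=
    aux_det_smul_one_add_smul hC.1 α β
  obtain ⟨hAeq, hApos⟩ := aux_posdef_det_eq hA
  have hposfac : ∀ i, 0 < α + β * hC.1.eigenvalues i := by
    intro i
    rcases eq_or_lt_of_le hα with h | h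
    · have hβ1 : β = 1 := by linarith
      simpa [← h, hβ1] using hlam i
    · have := mul_nonneg hβ (hlam i).le
      linarith
  have hP0 : 0 < ∏ i, hC.1.eigenvalues i :=
    Finset.prod_pos fun i _ => hlam i
  have hP1 : 0 < ∏ i, (α + β * hC.1.eigenvalues i) :=
    Finset.prod_pos fun i _ => hposfac i
  have hmixre : ((α : ℂ) • A + (β : ℂ) • B).det.re
      = A.det.re * ∏ i, (α + β * hC.1.eigenvalues i) := by
    rw [hdetmix, hAeq, hdmixC, ← Complex.ofReal_mul, Complex.ofReal_re]
    simp
  have hBre : B.det.re = A.det.re * ∏ i, hC.1.eigenvalues i := by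
    rw [hdetB, hAeq, hdetC, ← Complex.ofReal_mul, Complex.ofReal_re]
    simp
  rw [hmixre, hBre, Real.log_mul hApos.ne' hP0.ne', Real.log_mul hApos.ne' hP1.ne']
  have hlogs : β * Real.log (∏ i, hC.1.eigenvalues i)
      ≤ Real.log (∏ i, (α + β * hC.1.eigenvalues i)) := by
    rw [Real.log_prod (fun i _ => (hlam i).ne'),
      Real.log_prod (fun i _ => (hposfac i).ne'), Finset.mul_sum]
    refine Finset.sum_le_sum fun i _ => ?_
    have hcc := (strictConcaveOn_log_Ioi.concaveOn).2 (Set.mem_Ioi.mpr one_pos)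
      (Set.mem_Ioi.mpr (hlam i)) hα hβ hαβ
    simpa using hcc
  have hx : α * Real.log A.det.re + β * Real.log A.det.re = Real.log A.det.re := by
    rw [← add_mul, hαβ, one_mul]
  rw [mul_add]
  linarith

def eSet {nF nMT : ℕ} (H : Matrix (Fin nF) (Fin nMT) ℂ) (W k1 k2 t s : ℝ) : Set ℝ :=
  { e : ℝ | ∃ Q : Matrix (Fin nMT) (Fin nMT) ℂ, Q.PosSemidef ∧
    s ≤ W * t * Real.logb 2 (((1 : Matrix (Fin nF) (Fin nF) ℂ) + H * Q * Hᴴ).det.re) ∧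
    e = k1 * t + k2 * t * (Matrix.trace Q).re }

lemma aux_nonempty {nF nMT : ℕ} (H : Matrix (Fin nF) (Fin nMT) ℂ) (hH : H ≠ 0)
    (W k1 k2 t s : ℝ) (ht : 0 < t) (hW : 0 < W) :
    (eSet H W k1 k2 t s).Nonempty := by
  classical
  have hM : (H * Hᴴ).PosSemidef := posSemidef_self_mul_conjTranspose H
  have hMne : H * Hᴴ ≠ 0 := fun h => hH (Matrix.self_mul_conjTranspose_eq_zero.mp h)
  -- some eigenvalue is positive
  have hj : ∃ j, 0 < hM.1.eigenvalues j := by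
    by_contra hall
    push_neg at hall
    have hzero : ∀ j, hM.1.eigenvalues j = 0 :=
      fun j => le_antisymm (hall j) (hM.eigenvalues_nonneg j)
    apply hMne
    have := hM.1.spectral_theorem
    rw [this]
    have : Matrix.diagonal (RCLike.ofReal ∘ hM.1.eigenvalues)
        = (0 : Matrix (Fin nF) (Fin nF) ℂ) := by
      have : RCLike.ofReal ∘ hM.1.eigenvalues = fun _ => (0 : ℂ) := by
        funext i; simp [hzero i]
      rw [this, Matrix.diagonal_zero]
    rw [this, map_zero]
  obtain ⟨j, hj⟩ := hj
  set r : ℝ := s / (W * t) with hr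
  set c : ℝ := (2 : ℝ) ^ r / hM.1.eigenvalues j with hc
  have hcpos : 0 < c := div_pos (Real.rpow_pos_of_pos two_pos r) hj
  refine ⟨k1 * t + k2 * t * ((c : ℂ) • (1 : Matrix (Fin nMT) (Fin nMT) ℂ)).trace.re,
    (c : ℂ) • 1, aux_smul_psd Matrix.PosSemidef.one hcpos.le, ?_, rfl⟩
  have hHQ : H * ((c : ℂ) • (1 : Matrix (Fin nMT) (Fin nMT) ℂ)) * Hᴴ
      = (c : ℂ) • (H * Hᴴ) := by
    rw [Matrix.mul_smul, Matrix.mul_one, Matrix.smul_mul]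
  have hdet : ((1 : Matrix (Fin nF) (Fin nF) ℂ) + (c : ℂ) • (H * Hᴴ)).det
      = ((∏ i, (1 + c * hM.1.eigenvalues i) : ℝ) : ℂ) := by
    have := aux_det_smul_one_add_smul hM.1 1 c
    simpa using this
  have hprodge : (1 : ℝ) + c * hM.1.eigenvalues j
      ≤ ∏ i, (1 + c * hM.1.eigenvalues i) := by
    rw [← Finset.mul_prod_erase Finset.univ _ (Finset.mem_univ j)]
    have hfac : ∀ i, (1 : ℝ) ≤ 1 + c * hM.1.eigenvalues i := by
      intro i
      have := mul_nonneg hcpos.le (hM.eigenvalues_nonneg i)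
      linarith
    have h1 : (1 : ℝ) ≤ ∏ i ∈ Finset.univ.erase j, (1 + c * hM.1.eigenvalues i) := by
      have := Finset.prod_le_prod (s := Finset.univ.erase j)
        (f := fun _ => (1 : ℝ)) (g := fun i => 1 + c * hM.1.eigenvalues i)
        (fun i _ => zero_le_one) (fun i _ => hfac i)
      simpa using this
    have h0 : (0 : ℝ) ≤ 1 + c * hM.1.eigenvalues j := by linarith [hfac j]
    exact le_mul_of_one_le_right (by linarith [hfac j]) h1
  have hcj : c * hM.1.eigenvalues j = (2 : ℝ) ^ r := by
    rw [hc]; field_simp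
  have hge : (2 : ℝ) ^ r ≤ ((1 : Matrix (Fin nF) (Fin nF) ℂ) + (c : ℂ) • (H * Hᴴ)).det.re := by
    rw [hdet, Complex.ofReal_re]
    have : (2 : ℝ) ^ r ≤ 1 + c * hM.1.eigenvalues j := by rw [hcj]; linarith
    linarith
  have hlogb : r ≤ Real.logb 2 (((1 : Matrix (Fin nF) (Fin nF) ℂ) + (c : ℂ) • (H * Hᴴ)).det.re) := by
    have h1 : Real.logb 2 ((2 : ℝ) ^ r) = r := Real.logb_rpow two_pos (by norm_num)
    calc r = Real.logb 2 ((2 : ℝ) ^ r) := h1.symm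
      _ ≤ _ := Real.logb_le_logb_of_le one_lt_two (Real.rpow_pos_of_pos two_pos r) hge
  rw [hHQ]
  have hWt : (0 : ℝ) < W * t := mul_pos hW ht
  calc s = W * t * r := by rw [hr]; field_simp
    _ ≤ _ := mul_le_mul_of_nonneg_left hlogb hWt.le

lemma aux_key {nF nMT : ℕ} (H : Matrix (Fin nF) (Fin nMT) ℂ) (W k1 k2 : ℝ) (hW : 0 < W)
    {t₁ s₁ t₂ s₂ a b : ℝ} (ht₁ : 0 < t₁) (ht₂ : 0 < t₂) (ha : 0 < a) (hb : 0 < b)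
    (hab : a + b = 1) {e₁ e₂ : ℝ}
    (he₁ : e₁ ∈ eSet H W k1 k2 t₁ s₁) (he₂ : e₂ ∈ eSet H W k1 k2 t₂ s₂) :
    a * e₁ + b * e₂ ∈ eSet H W k1 k2 (a * t₁ + b * t₂) (a * s₁ + b * s₂) := by
  obtain ⟨Q₁, hQ₁, hc₁, rfl⟩ := he₁
  obtain ⟨Q₂, hQ₂, hc₂, rfl⟩ := he₂
  set t : ℝ := a * t₁ + b * t₂ with htdef
  have ht : 0 < t := by positivity
  set α : ℝ := a * t₁ / t with hαdef
  set β : ℝ := b * t₂ / t with hβdef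
  have hα : 0 < α := by positivity
  have hβ : 0 < β := by positivity
  have hαβ : α + β = 1 := by rw [hαdef, hβdef]; field_simp; exact htdef.symm
  set Q : Matrix (Fin nMT) (Fin nMT) ℂ := (α : ℂ) • Q₁ + (β : ℂ) • Q₂ with hQdef
  have hQ : Q.PosSemidef := (aux_smul_psd hQ₁ hα.le).add (aux_smul_psd hQ₂ hβ.le)
  set A : Matrix (Fin nF) (Fin nF) ℂ := 1 + H * Q₁ * Hᴴ with hAdef
  set B : Matrix (Fin nF) (Fin nF) ℂ := 1 + H * Q₂ * Hᴴ with hBdef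
  have hAp : A.PosDef :=
    Matrix.PosDef.add_posSemidef Matrix.PosDef.one (hQ₁.mul_mul_conjTranspose_same H)
  have hBp : B.PosDef :=
    Matrix.PosDef.add_posSemidef Matrix.PosDef.one (hQ₂.mul_mul_conjTranspose_same H)
  have hone : (α : ℂ) • (1 : Matrix (Fin nF) (Fin nF) ℂ) + (β : ℂ) • 1 = 1 := by
    rw [← add_smul]
    norm_cast
    rw [hαβ, one_smul]
  have hmixeq : (1 : Matrix (Fin nF) (Fin nF) ℂ) + H * Q * Hᴴ = (α : ℂ) • A + (β : ℂ) • B := by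
    have hexp : H * Q * Hᴴ = (α : ℂ) • (H * Q₁ * Hᴴ) + (β : ℂ) • (H * Q₂ * Hᴴ) := by
      rw [hQdef, Matrix.mul_add, Matrix.add_mul, Matrix.mul_smul, Matrix.smul_mul,
        Matrix.mul_smul, Matrix.smul_mul]
    rw [hexp, hAdef, hBdef, smul_add, smul_add]
    conv_lhs => rw [← hone]
    abel
  refine ⟨Q, hQ, ?_, ?_⟩
  · -- rate constraint
    have hlog := aux_logdet_concave hAp hBp hα.le hβ.le hαβ
    rw [← hmixeq] at hlog
    set LA : ℝ := Real.logb 2 A.det.re with hLA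
    set LB : ℝ := Real.logb 2 B.det.re with hLB
    set LM : ℝ := Real.logb 2 (((1 : Matrix (Fin nF) (Fin nF) ℂ) + H * Q * Hᴴ).det.re) with hLM
    have hlog2 : (0 : ℝ) < Real.log 2 := Real.log_pos one_lt_two
    have hlogb : α * LA + β * LB ≤ LM := by
      rw [hLA, hLB, hLM, Real.logb, Real.logb, Real.logb, ← mul_div_assoc, ← mul_div_assoc,
        ← add_div]
      exact (div_le_div_iff_of_pos_right hlog2).mpr hlog
    have heq : W * t * (α * LA + β * LB) = a * (W * t₁ * LA) + b * (W * t₂ * LB) := by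
      rw [hαdef, hβdef]
      field_simp
    calc a * s₁ + b * s₂ ≤ a * (W * t₁ * LA) + b * (W * t₂ * LB) := by
          have h1 := mul_le_mul_of_nonneg_left hc₁ ha.le
          have h2 := mul_le_mul_of_nonneg_left hc₂ hb.le
          linarith
      _ = W * t * (α * LA + β * LB) := heq.symm
      _ ≤ W * t * LM := mul_le_mul_of_nonneg_left hlogb (by positivity)
  · -- energy value
    have htr : Q.trace.re = α * Q₁.trace.re + β * Q₂.trace.re := by
      rw [hQdef, Matrix.trace_add, Matrix.trace_smul, Matrix.trace_smul]
      simp [Complex.re_ofReal_mul, smul_eq_mul]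
    rw [htr, hαdef, hβdef]
    field_simp
    ring

lemma eUL_eq_sInf {nF nMT : ℕ} (H : Matrix (Fin nF) (Fin nMT) ℂ) (W k1 k2 t s : ℝ) :
    eUL H W k1 k2 t s = sInf (eSet H W k1 k2 t s) := rfl

lemma aux_bddBelow {nF nMT : ℕ} (H : Matrix (Fin nF) (Fin nMT) ℂ) (W k1 k2 t s : ℝ)
    (ht : 0 < t) (hk2 : 0 ≤ k2) : ∀ e ∈ eSet H W k1 k2 t s, k1 * t ≤ e := by
  rintro e ⟨Q, hQ, -, rfl⟩
  linarith [mul_nonneg (mul_nonneg hk2 ht.le) (aux_trace_re_nonneg hQ)]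

lemma aux_eUL_zero {nF nMT : ℕ} (W k1 k2 t s : ℝ) (ht : 0 < t) (hk2 : 0 ≤ k2) :
    sInf (eSet (0 : Matrix (Fin nF) (Fin nMT) ℂ) W k1 k2 t s)
      = if s ≤ 0 then k1 * t else 0 := by
  have hset : eSet (0 : Matrix (Fin nF) (Fin nMT) ℂ) W k1 k2 t s
      = {e | ∃ Q : Matrix (Fin nMT) (Fin nMT) ℂ, Q.PosSemidef ∧ s ≤ 0 ∧
          e = k1 * t + k2 * t * (Matrix.trace Q).re} := by
    unfold eSet
    ext e
    simp [Matrix.zero_mul, Matrix.det_one, Real.logb_one]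
  split_ifs with hs
  · rw [hset]
    apply le_antisymm
    · apply csInf_le
      · refine ⟨k1 * t, ?_⟩
        rintro e ⟨Q, hQ, -, rfl⟩
        linarith [mul_nonneg (mul_nonneg hk2 ht.le) (aux_trace_re_nonneg hQ)]
      · exact ⟨0, Matrix.PosSemidef.zero, hs, by simp⟩
    · refine le_csInf ⟨k1 * t, 0, Matrix.PosSemidef.zero, hs, by simp⟩ ?_
      rintro e ⟨Q, hQ, -, rfl⟩
      linarith [mul_nonneg (mul_nonneg hk2 ht.le) (aux_trace_re_nonneg hQ)]
  · rw [hset]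
    have : {e | ∃ Q : Matrix (Fin nMT) (Fin nMT) ℂ, Q.PosSemidef ∧ s ≤ 0 ∧
        e = k1 * t + k2 * t * (Matrix.trace Q).re} = (∅ : Set ℝ) := by
      rw [Set.eq_empty_iff_forall_notMem]
      rintro e ⟨Q, hQ, hc, -⟩
      exact hs hc
    rw [this, Real.sInf_empty]

end EULAux

/-- The minimum uplink energy function `(t,s) ↦ e_UL(t,s)` is jointly convex on
`{(t,s) : t > 0, s ≥ 0}`. -/
theorem eUL_convexOn (nF nMT : ℕ) (H : Matrix (Fin nF) (Fin nMT) ℂ)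
    (W k1 k2 : ℝ) (hW : 0 < W) (hk1 : 0 ≤ k1) (hk2 : 0 < k2) :
    ConvexOn ℝ {p : ℝ × ℝ | 0 < p.1 ∧ 0 ≤ p.2}
      (fun p : ℝ × ℝ => eUL H W k1 k2 p.1 p.2) := by
  have hconv : Convex ℝ {p : ℝ × ℝ | 0 < p.1 ∧ 0 ≤ p.2} := by
    intro x hx y hy a b ha hb hab
    refine ⟨?_, ?_⟩
    · simp only [Prod.fst_add, Prod.smul_fst, smul_eq_mul]
      rcases eq_or_lt_of_le ha with h | h
      · have hb1 : b = 1 := by linarith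
        simpa [← h, hb1] using hy.1
      · exact add_pos_of_pos_of_nonneg (mul_pos h hx.1) (mul_nonneg hb hy.1.le)
    · simp only [Prod.snd_add, Prod.smul_snd, smul_eq_mul]
      exact add_nonneg (mul_nonneg ha hx.2) (mul_nonneg hb hy.2)
  refine ⟨hconv, ?_⟩
  rintro ⟨t₁, s₁⟩ ⟨hp1, hp2⟩ ⟨t₂, s₂⟩ ⟨hq1, hq2⟩ a b ha hb hab
  simp only [Prod.smul_mk, Prod.mk_add_mk, smul_eq_mul]
  rcases eq_or_lt_of_le ha with h | ha'
  · have hb1 : b = 1 := by linarith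
    simp [← h, hb1]
  rcases eq_or_lt_of_le hb with h | hb'
  · have ha1 : a = 1 := by linarith
    simp [← h, ha1]
  have ht : 0 < a * t₁ + b * t₂ := by positivity
  by_cases hH : H = 0
  · subst hH
    rw [eUL_eq_sInf, eUL_eq_sInf, eUL_eq_sInf,
      aux_eUL_zero W k1 k2 _ _ ht hk2.le, aux_eUL_zero W k1 k2 _ _ hp1 hk2.le,
      aux_eUL_zero W k1 k2 _ _ hq1 hk2.le]
    rcases le_or_gt s₁ 0 with h1 | h1 <;> rcases le_or_gt s₂ 0 with h2 | h2
    · have hm : a * s₁ + b * s₂ ≤ 0 := by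
        nlinarith [mul_nonpos_of_nonneg_of_nonpos ha h1,
          mul_nonpos_of_nonneg_of_nonpos hb h2]
      rw [if_pos h1, if_pos h2, if_pos hm]
      exact le_of_eq (by ring)
    · have hm : 0 < a * s₁ + b * s₂ := by
        nlinarith [mul_pos hb' h2, mul_nonneg ha hp2]
      rw [if_pos h1, if_neg (not_le.mpr h2), if_neg (not_le.mpr hm)]
      nlinarith [mul_nonneg hk1 hp1.le]
    · have hm : 0 < a * s₁ + b * s₂ := by
        nlinarith [mul_pos ha' h1, mul_nonneg hb hq2]
      rw [if_neg (not_le.mpr h1), if_pos h2, if_neg (not_le.mpr hm)]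
      nlinarith [mul_nonneg hk1 hq1.le]
    · have hm : 0 < a * s₁ + b * s₂ := by
        nlinarith [mul_pos ha' h1, mul_pos hb' h2]
      rw [if_neg (not_le.mpr h1), if_neg (not_le.mpr h2), if_neg (not_le.mpr hm)]
      simp
  · have hne1 : (eSet H W k1 k2 t₁ s₁).Nonempty := aux_nonempty H hH W k1 k2 t₁ s₁ hp1 hW
    have hne2 : (eSet H W k1 k2 t₂ s₂).Nonempty := aux_nonempty H hH W k1 k2 t₂ s₂ hq1 hW
    rw [eUL_eq_sInf, eUL_eq_sInf, eUL_eq_sInf]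
    refine le_of_forall_pos_le_add fun ε hε => ?_
    obtain ⟨e₁, he₁, hlt₁⟩ := Real.lt_sInf_add_pos hne1 (half_pos hε)
    obtain ⟨e₂, he₂, hlt₂⟩ := Real.lt_sInf_add_pos hne2 (half_pos hε)
    have hkey := aux_key H W k1 k2 hW hp1 hq1 ha' hb' hab he₁ he₂
    have hle : sInf (eSet H W k1 k2 (a * t₁ + b * t₂) (a * s₁ + b * s₂)) ≤ a * e₁ + b * e₂ :=
      csInf_le ⟨k1 * (a * t₁ + b * t₂), fun e he =>
        aux_bddBelow H W k1 k2 _ _ ht hk2.le e he⟩ hkey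
    have h1 : a * e₁ ≤ a * (sInf (eSet H W k1 k2 t₁ s₁) + ε / 2) :=
      mul_le_mul_of_nonneg_left hlt₁.le ha
    have h2 : b * e₂ ≤ b * (sInf (eSet H W k1 k2 t₂ s₂) + ε / 2) :=
      mul_le_mul_of_nonneg_left hlt₂.le hb
    have hexp : a * (sInf (eSet H W k1 k2 t₁ s₁) + ε / 2)
        + b * (sInf (eSet H W k1 k2 t₂ s₂) + ε / 2)
        = a * sInf (eSet H W k1 k2 t₁ s₁) + b * sInf (eSet H W k1 k2 t₂ s₂) + ε / 2 := by
      linear_combination (ε / 2) * hab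
    linarith
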